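/- If f is ε-approximately k-smooth and f ≠ 0, then for every vertex i, p_f(i) = f_i²/‖f‖₂² ≤ (‖U_kᵀ δ_i‖₂ + ε)². -/
import Mathlib
open Matrix


/-- The local cumulative coherence of order `k` at node `i`: the Euclidean norm
`‖U_kᵀ δ_i‖₂`, where `δ_i` is the `i`-th standard basis vector of `ℝ^n`. -/
noncomputable def localCoherence {n k : ℕ} (Uk : Matrix (Fin n) (Fin k) ℝ)
    (i : Fin n) : ℝ :=
  Real.sqrt (∑ l, (Uk.transpose.mulVec (Pi.single i 1) l) ^ 2)

/-- if `f` is `ε`-approximately `k`-smooth (i.e., writing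
`f = f_ks + f_r` with `f_ks = U_k U_kᵀ f`, one has `|f_r(i)| ≤ ε ‖f_ks‖₂` for all `i`,
where `ε > 0`) and `f ≠ 0`, then for every vertex `i`,
`p_f(i) = f_i²/‖f‖₂² ≤ (‖U_kᵀ δ_i‖₂ + ε)²`. -/
theorem approx_ksmooth_density_coherence_bound
    {n k : ℕ} (hk1 : 1 ≤ k) (hkn : k ≤ n)
    (Uk : Matrix (Fin n) (Fin k) ℝ)
    (hU : Uk.transpose * Uk = 1)
    (f : Fin n → ℝ) (ε : ℝ) (hε : 0 < ε)
    (fks : Fin n → ℝ) (hfks : fks = Uk.mulVec (Uk.transpose.mulVec f))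
    (happrox : ∀ i, |f i - fks i| ≤ ε * Real.sqrt (∑ j, fks j ^ 2))
    (hf0 : f ≠ 0)
    (i : Fin n) :
    f i ^ 2 / (∑ j, f j ^ 2) ≤ (localCoherence Uk i + ε) ^ 2 := by
  classical
  set c : Fin k → ℝ := Uk.transpose.mulVec f with hc
  set S : ℝ := Real.sqrt (∑ j, fks j ^ 2) with hS
  -- norm of fks equals norm of c
  have hgf : fks ⬝ᵥ f = c ⬝ᵥ c := by
    rw [hfks, dotProduct_comm, Matrix.dotProduct_mulVec,
      ← Matrix.mulVec_transpose, ← hc]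
  have hgg : fks ⬝ᵥ fks = c ⬝ᵥ c := by
    rw [hfks, Matrix.dotProduct_mulVec, ← Matrix.mulVec_transpose,
      Matrix.mulVec_mulVec, hU, Matrix.one_mulVec]
  -- Pythagoras: ∑ f² = ∑ fks² + ∑ (f-fks)²
  have horth : fks ⬝ᵥ (f - fks) = 0 := by
    have : fks ⬝ᵥ (f - fks) = fks ⬝ᵥ f - fks ⬝ᵥ fks := dotProduct_sub _ _ _
    rw [this, hgf, hgg, sub_self]
  have hpyth : (∑ j, f j ^ 2) = (∑ j, fks j ^ 2) + ∑ j, (f j - fks j) ^ 2 := by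
    have h0 : ∑ j, fks j * (f j - fks j) = 0 := horth
    have he : (∑ j, f j ^ 2) =
        ∑ j, (fks j ^ 2 + (f j - fks j) ^ 2 + 2 * (fks j * (f j - fks j))) :=
      Finset.sum_congr rfl (fun j _ => by ring)
    rw [he, Finset.sum_add_distrib, Finset.sum_add_distrib, ← Finset.mul_sum, h0,
      mul_zero, add_zero]
  have hfks_le : (∑ j, fks j ^ 2) ≤ ∑ j, f j ^ 2 := by
    rw [hpyth]
    exact le_add_of_nonneg_right (Finset.sum_nonneg fun j _ => sq_nonneg _)
  have hS_nonneg : 0 ≤ S := Real.sqrt_nonneg _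
  have hSsq : S ^ 2 = ∑ j, fks j ^ 2 :=
    Real.sq_sqrt (Finset.sum_nonneg fun j _ => sq_nonneg _)
  -- S ≠ 0 (else f = 0)
  have hSpos : 0 < S := by
    rcases hS_nonneg.lt_or_eq with h | h
    · exact h
    · exfalso
      apply hf0
      funext j
      have : |f j - fks j| ≤ ε * S := happrox j
      rw [← h, mul_zero] at this
      have hfj : f j = fks j := by
        have := abs_nonpos_iff.mp this
        linarith [sub_eq_zero.mp this]
      -- fks = 0 since ∑ fks² = 0
      have hsum0 : (∑ j, fks j ^ 2) = 0 := by
        have := hSsq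
        rw [← h] at this
        simpa using this.symm
      have hfks0 : fks j = 0 := by
        have := (Finset.sum_eq_zero_iff_of_nonneg
          (fun j _ => sq_nonneg (fks j))).mp hsum0 j (Finset.mem_univ j)
        exact pow_eq_zero_iff (by norm_num) |>.mp this
      simp [hfj, hfks0]
  -- bound |fks i| via Cauchy-Schwarz
  have hcoh : localCoherence Uk i = Real.sqrt (∑ l, Uk i l ^ 2) := by
    unfold localCoherence
    congr 1
    refine Finset.sum_congr rfl fun l _ => ?_
    rw [Matrix.mulVec_single_one]
    simp [Matrix.transpose_apply]
  have hfksi : |fks i| ≤ localCoherence Uk i * S := by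
    have h1 : fks i = ∑ l, Uk i l * c l := by rw [hfks]; rfl
    have h2 : (∑ l, Uk i l * c l) ^ 2 ≤ (∑ l, Uk i l ^ 2) * ∑ l, c l ^ 2 :=
      Finset.sum_mul_sq_le_sq_mul_sq _ _ _
    have hcc : (∑ l, c l ^ 2) = ∑ j, fks j ^ 2 := by
      have : c ⬝ᵥ c = ∑ l, c l * c l := rfl
      have h3 : (∑ j, fks j * fks j) = ∑ l, c l * c l := hgg
      simpa [sq] using h3.symm
    have h4 : |fks i| = Real.sqrt (fks i ^ 2) := (Real.sqrt_sq_eq_abs _).symm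
    rw [h4, hcoh, hS, h1]
    calc Real.sqrt ((∑ l, Uk i l * c l) ^ 2)
        ≤ Real.sqrt ((∑ l, Uk i l ^ 2) * ∑ l, c l ^ 2) := Real.sqrt_le_sqrt h2
      _ = Real.sqrt (∑ l, Uk i l ^ 2) * Real.sqrt (∑ j, fks j ^ 2) := by
          rw [hcc, Real.sqrt_mul (Finset.sum_nonneg fun l _ => sq_nonneg _)]
  -- combine
  have hfi : |f i| ≤ (localCoherence Uk i + ε) * S := by
    have := happrox i
    calc |f i| = |fks i + (f i - fks i)| := by ring_nf
      _ ≤ |fks i| + |f i - fks i| := abs_add_le _ _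
      _ ≤ localCoherence Uk i * S + ε * S := add_le_add hfksi (by rw [hS]; exact happrox i)
      _ = (localCoherence Uk i + ε) * S := by ring
  have hfi2 : f i ^ 2 ≤ (localCoherence Uk i + ε) ^ 2 * S ^ 2 := by
    calc f i ^ 2 = |f i| ^ 2 := (sq_abs _).symm
      _ ≤ ((localCoherence Uk i + ε) * S) ^ 2 := by
          apply pow_le_pow_left₀ (abs_nonneg _) hfi _
      _ = (localCoherence Uk i + ε) ^ 2 * S ^ 2 := by ring
  have hsumpos : 0 < ∑ j, f j ^ 2 := by
    rcases (Finset.sum_nonneg fun j _ => sq_nonneg (f j)).lt_or_eq with h | h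
    · exact h
    · exfalso
      apply hf0
      funext j
      have := (Finset.sum_eq_zero_iff_of_nonneg
        (fun j _ => sq_nonneg (f j))).mp h.symm j (Finset.mem_univ j)
      have := pow_eq_zero_iff (n := 2) (by norm_num) |>.mp this
      simpa using this
  rw [div_le_iff₀ hsumpos]
  calc f i ^ 2 ≤ (localCoherence Uk i + ε) ^ 2 * S ^ 2 := hfi2
    _ ≤ (localCoherence Uk i + ε) ^ 2 * ∑ j, f j ^ 2 := by
        apply mul_le_mul_of_nonneg_left _ (sq_nonneg _)
        rw [hSsq]; exact hfks_le
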